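/- Let d ≥ 1 be an integer, let ρ, ρ₁ satisfy 2√d ≤ ρ < ρ₁ ≤ +∞, and let χ : [ρ−2√d, ρ₁) → [0,∞) be continuous and nonincreasing. Then ∑_{h∈ℤ^d, ρ≤|h|<ρ₁} χ(|h|) ≤ (2π^{d/2}/Γ(d/2)) ∫_{ρ−2√d}^{ρ₁} (t+√d)^{d−1} χ(t) dt. -/

import Mathlib

open Set MeasureTheory

/-- The Euclidean norm of a lattice point `h ∈ ℤ^d`. -/
noncomputable def znorm {d : ℕ} (h : Fin d → ℤ) : ℝ :=
  Real.sqrt (∑ i, ((h i : ℝ)) ^ 2)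

namespace Stmt16Aux

variable {d : ℕ}

/-- Embedding of the lattice into Euclidean space. -/
noncomputable def emb (h : Fin d → ℤ) : EuclideanSpace ℝ (Fin d) := WithLp.toLp 2 (fun i => (h i : ℝ))

/-- The half-open unit cube at a lattice point. -/
def cube (h : Fin d → ℤ) : Set (EuclideanSpace ℝ (Fin d)) :=
  {x | ∀ i, (h i : ℝ) ≤ x i ∧ x i < h i + 1}

lemma cube_eq (h : Fin d → ℤ) :
    cube h = (MeasurableEquiv.toLp 2 (Fin d → ℝ)).symm ⁻¹'
      (Set.univ.pi fun i => Ico ((h i : ℝ)) (h i + 1)) := by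
  ext x
  simp [cube, Set.mem_pi, mem_Ico]

lemma cube_measurable (h : Fin d → ℤ) : MeasurableSet (cube h) := by
  rw [cube_eq]
  exact (MeasurableEquiv.toLp 2 (Fin d → ℝ)).symm.measurable
    (MeasurableSet.univ_pi fun i => measurableSet_Ico)

lemma volume_cube (h : Fin d → ℤ) : volume (cube h) = 1 := by
  rw [cube_eq, (EuclideanSpace.volume_preserving_symm_measurableEquiv_toLp (Fin d)).measure_preimage
      (MeasurableSet.univ_pi fun i => measurableSet_Ico).nullMeasurableSet,
    volume_pi_pi]
  simp

lemma cube_disjoint {h h' : Fin d → ℤ} (hne : h ≠ h') : Disjoint (cube h) (cube h') := by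
  rw [Set.disjoint_left]
  intro x hx hx'
  apply hne
  funext i
  have h1 := hx i
  have h2 := hx' i
  have e1 : h i = ⌊x i⌋ := (Int.floor_eq_iff.mpr h1).symm
  have e2 : h' i = ⌊x i⌋ := (Int.floor_eq_iff.mpr h2).symm
  rw [e1, e2]

lemma norm_emb (h : Fin d → ℤ) : ‖emb h‖ = znorm h := by
  rw [EuclideanSpace.norm_eq, znorm]
  congr 1
  refine Finset.sum_congr rfl fun i _ => ?_
  rw [Real.norm_eq_abs, sq_abs]
  rfl

lemma norm_bounds {h : Fin d → ℤ} {x : EuclideanSpace ℝ (Fin d)} (hx : x ∈ cube h) :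
    znorm h - Real.sqrt d ≤ ‖x‖ ∧ ‖x‖ ≤ znorm h + Real.sqrt d := by
  have hdist : ‖x - emb h‖ ≤ Real.sqrt d := by
    rw [EuclideanSpace.norm_eq]
    have hsum : (∑ i, ‖(x - emb h) i‖ ^ 2) ≤ (d : ℝ) := by
      calc (∑ i, ‖(x - emb h) i‖ ^ 2) ≤ ∑ _i : Fin d, (1 : ℝ) := by
            refine Finset.sum_le_sum fun i _ => ?_
            have hxi := hx i
            have : (x - emb h) i = x i - (h i : ℝ) := rfl
            rw [this, Real.norm_eq_abs, sq_abs]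
            nlinarith [hxi.1, hxi.2]
        _ = (d : ℝ) := by simp
    calc Real.sqrt (∑ i, ‖(x - emb h) i‖ ^ 2) ≤ Real.sqrt (d : ℝ) := Real.sqrt_le_sqrt hsum
      _ = Real.sqrt d := rfl
  have h1 : ‖x‖ ≤ ‖emb h‖ + ‖x - emb h‖ := by
    have := norm_add_le (emb h) (x - emb h)
    simpa using this
  have h2 : ‖emb h‖ ≤ ‖x‖ + ‖x - emb h‖ := by
    have := norm_add_le x (emb h - x)
    have hrev : ‖emb h - x‖ = ‖x - emb h‖ := norm_sub_rev _ _
    simp only [add_sub_cancel] at this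
    linarith [this, hrev ▸ this]
  rw [norm_emb] at h1 h2
  constructor <;> linarith

/-- Counting bound: the number of lattice points in the annulus `ρ ≤ |h| ≤ u` is at most the
volume of the Euclidean annulus of radii `ρ - √d` and `u + √d`. -/
lemma count_le (ρ u : ℝ) :
    Measure.count {h : Fin d → ℤ | ρ ≤ znorm h ∧ znorm h ≤ u} ≤
      volume (Metric.closedBall (0 : EuclideanSpace ℝ (Fin d)) (u + Real.sqrt d)
          \ Metric.ball 0 (ρ - Real.sqrt d)) := by
  set A := {h : Fin d → ℤ | ρ ≤ znorm h ∧ znorm h ≤ u} with hA_def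
  have hA : MeasurableSet A := (Set.to_countable A).measurableSet
  rw [Measure.count_apply hA, ← ENNReal.tsum_set_one]
  calc (∑' _ : A, (1 : ENNReal)) = ∑' h : A, volume (cube (Subtype.val h)) := by
        refine tsum_congr fun h => (volume_cube h.1).symm
    _ = volume (⋃ h : A, cube (Subtype.val h)) := by
        refine (measure_iUnion ?_ (fun h : A => cube_measurable h.1)).symm
        intro h h' hne
        exact cube_disjoint fun e => hne (Subtype.ext e)
    _ ≤ _ := by
        refine measure_mono ?_
        rintro x hx
        rw [Set.mem_iUnion] at hx
        obtain ⟨h, hxh⟩ := hx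
        obtain ⟨hb1, hb2⟩ := norm_bounds hxh
        obtain ⟨hρh, hhu⟩ := h.2
        constructor
        · rw [Metric.mem_closedBall, dist_zero_right]
          linarith
        · simp only [Metric.mem_ball, dist_zero_right, not_lt]
          linarith

/-- Volume of a Euclidean annulus, bounded by the surface-area constant times the radial
integral bound. -/
lemma annulus_vol (hd : 1 ≤ d) {a b : ℝ} (ha : 0 ≤ a) (hab : a ≤ b) :
    volume (Metric.closedBall (0 : EuclideanSpace ℝ (Fin d)) b \ Metric.ball 0 a) ≤
      ENNReal.ofReal (2 * Real.pi ^ ((d : ℝ) / 2) / Real.Gamma ((d : ℝ) / 2)) *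
        ENNReal.ofReal ((b ^ d - a ^ d) / d) := by
  haveI : Nonempty (Fin d) := ⟨⟨0, hd⟩⟩
  have hb : (0 : ℝ) ≤ b := ha.trans hab
  set κ : ℝ := Real.sqrt Real.pi ^ (Fintype.card (Fin d)) /
      Real.Gamma ((Fintype.card (Fin d)) / 2 + 1) with hκ_def
  have hvol_ball : volume (Metric.ball (0 : EuclideanSpace ℝ (Fin d)) a) =
      ENNReal.ofReal (a ^ d * κ) := by
    rw [EuclideanSpace.volume_ball, ← ENNReal.ofReal_pow ha, ← ENNReal.ofReal_mul (by positivity)]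
    congr 2
    simp [Fintype.card_fin]
  have hvol_cb : volume (Metric.closedBall (0 : EuclideanSpace ℝ (Fin d)) b) =
      ENNReal.ofReal (b ^ d * κ) := by
    rw [EuclideanSpace.volume_closedBall, ← ENNReal.ofReal_pow hb,
      ← ENNReal.ofReal_mul (by positivity)]
    congr 2
    simp [Fintype.card_fin]
  rw [measure_diff (Metric.ball_subset_closedBall.trans
        (Metric.closedBall_subset_closedBall hab))
      measurableSet_ball.nullMeasurableSet (by rw [hvol_ball]; exact ENNReal.ofReal_ne_top),
    hvol_ball, hvol_cb]
  -- constants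
  have hd0 : (0 : ℝ) < d := by exact_mod_cast hd
  have hΓpos : 0 < Real.Gamma ((d : ℝ) / 2) := Real.Gamma_pos_of_pos (by positivity)
  have hκ : κ = Real.pi ^ ((d : ℝ) / 2) / ((d / 2) * Real.Gamma ((d : ℝ) / 2)) := by
    rw [hκ_def]
    have hcard : (Fintype.card (Fin d) : ℝ) = (d : ℝ) := by simp
    rw [Fintype.card_fin]
    have hP : Real.sqrt Real.pi ^ d = Real.pi ^ ((d : ℝ) / 2) := by
      rw [Real.sqrt_eq_rpow, ← Real.rpow_natCast (Real.pi ^ ((1:ℝ)/2)) d,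
        ← Real.rpow_mul Real.pi_pos.le]
      congr 1
      ring
    rw [hP, Real.Gamma_add_one (by positivity)]
  have hkey : 2 * Real.pi ^ ((d : ℝ) / 2) / Real.Gamma ((d : ℝ) / 2) * ((b ^ d - a ^ d) / d)
      = (b ^ d - a ^ d) * κ := by
    rw [hκ]
    field_simp
  have hκnn : 0 ≤ κ := by
    rw [hκ]
    positivity
  rw [← ENNReal.ofReal_mul (by positivity), hkey, tsub_le_iff_right,
    ← ENNReal.ofReal_add (by nlinarith [pow_le_pow_left₀ ha hab d]) (by positivity)]
  apply ENNReal.ofReal_le_ofReal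
  nlinarith [pow_le_pow_left₀ ha hab d]

/-- The elementary integral `∫_a^u (t+√d)^{d-1} dt = ((u+√d)^d - (a+√d)^d)/d`, as a lower bound
for the Lebesgue integral. -/
lemma lint_Icc (hd : 1 ≤ d) (sd : ℝ) {a u : ℝ} (hsd : 0 ≤ a + sd) (hau : a ≤ u) :
    ENNReal.ofReal (((u + sd) ^ d - (a + sd) ^ d) / d) ≤
      ∫⁻ t in Icc a u, ENNReal.ofReal ((t + sd) ^ (d - 1)) := by
  have hcont : Continuous fun t : ℝ => (t + sd) ^ (d - 1) :=
    (continuous_id.add continuous_const).pow _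
  have hint : IntegrableOn (fun t : ℝ => (t + sd) ^ (d - 1)) (Icc a u) :=
    hcont.integrableOn_Icc
  have hnn : 0 ≤ᵐ[volume.restrict (Icc a u)] fun t : ℝ => (t + sd) ^ (d - 1) :=
    (ae_restrict_iff' measurableSet_Icc).2 (ae_of_all _ fun t ht =>
      pow_nonneg (by linarith [ht.1]) _)
  rw [← ofReal_integral_eq_lintegral_ofReal hint hnn]
  apply ENNReal.ofReal_le_ofReal
  rw [MeasureTheory.integral_Icc_eq_integral_Ioc, ← intervalIntegral.integral_of_le hau]
  have := intervalIntegral.integral_comp_add_right (a := a) (b := u)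
    (fun t : ℝ => t ^ (d - 1)) sd
  rw [this, integral_pow]
  have h1 : d - 1 + 1 = d := Nat.sub_add_cancel hd
  have h2 : ((d - 1 : ℕ) : ℝ) + 1 = (d : ℝ) := by
    rw [Nat.cast_sub hd]; push_cast; ring
  rw [h1, h2]

end Stmt16Aux

theorem stmt_16 (d : ℕ) (hd : 1 ≤ d) (ρ : ℝ) (ρ₁ : EReal)
    (hρ : 2 * Real.sqrt d ≤ ρ) (hρ₁ : (ρ : EReal) < ρ₁)
    (χ : ℝ → ℝ)
    (hχ_cont : ContinuousOn χ {t : ℝ | ρ - 2 * Real.sqrt d ≤ t ∧ (t : EReal) < ρ₁})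
    (hχ_nonneg : ∀ t : ℝ, ρ - 2 * Real.sqrt d ≤ t → (t : EReal) < ρ₁ → 0 ≤ χ t)
    (hχ_anti : ∀ s t : ℝ, ρ - 2 * Real.sqrt d ≤ s → s ≤ t → (t : EReal) < ρ₁ →
      χ t ≤ χ s) :
    ∑' h : {h : Fin d → ℤ // ρ ≤ znorm h ∧ (znorm h : EReal) < ρ₁},
        ENNReal.ofReal (χ (znorm h.1)) ≤
      ENNReal.ofReal (2 * Real.pi ^ ((d : ℝ) / 2) / Real.Gamma ((d : ℝ) / 2)) *
        ∫⁻ t in {t : ℝ | ρ - 2 * Real.sqrt d ≤ t ∧ (t : EReal) < ρ₁},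
          ENNReal.ofReal ((t + Real.sqrt d) ^ (d - 1) * χ t) := by
  classical
  have hsd0 : (0 : ℝ) ≤ Real.sqrt d := Real.sqrt_nonneg _
  set sd : ℝ := Real.sqrt d with hsd_def
  set a : ℝ := ρ - 2 * sd with ha_def
  set C : ENNReal := ENNReal.ofReal (2 * Real.pi ^ ((d : ℝ) / 2) / Real.Gamma ((d : ℝ) / 2))
    with hC_def
  set I : Set ℝ := {t : ℝ | a ≤ t ∧ (t : EReal) < ρ₁} with hI_def
  have haρ : a ≤ ρ := by rw [ha_def]; linarith
  have haρ₁ : (a : EReal) < ρ₁ := lt_of_le_of_lt (EReal.coe_le_coe_iff.2 haρ) hρ₁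
  have hIm : MeasurableSet I := by
    have : I = Ici a ∩ (fun t : ℝ => (t : EReal)) ⁻¹' (Iio ρ₁) := rfl
    rw [this]
    exact measurableSet_Ici.inter
      (continuous_coe_real_ereal.measurable measurableSet_Iio)
  have hnn : ∀ t ∈ I, 0 ≤ χ t := fun t ht => hχ_nonneg t ht.1 ht.2
  -- the monotone extension of χ
  set g : ℝ → ℝ := fun t => sInf (χ '' {s : ℝ | s ∈ I ∧ s ≤ max t a}) with hg_def
  have hSetne : ∀ t : ℝ, ({s : ℝ | s ∈ I ∧ s ≤ max t a}).Nonempty :=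
    fun t => ⟨a, ⟨⟨le_refl a, haρ₁⟩, le_max_right _ _⟩⟩
  have hbdd : ∀ t : ℝ, BddBelow (χ '' {s : ℝ | s ∈ I ∧ s ≤ max t a}) := by
    intro t
    refine ⟨0, ?_⟩
    rintro y ⟨s, hs, rfl⟩
    exact hnn s hs.1
  have hg_nonneg : ∀ t, 0 ≤ g t := by
    intro t
    refine le_csInf ((hSetne t).image χ) ?_
    rintro y ⟨s, hs, rfl⟩
    exact hnn s hs.1
  have hg_anti : Antitone g := by
    intro t t' htt'
    refine csInf_le_csInf (hbdd t') ((hSetne t).image χ) ?_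
    refine Set.image_mono fun s hs => ⟨hs.1, hs.2.trans (max_le_max htt' le_rfl)⟩
  have hg_eq : ∀ t ∈ I, g t = χ t := by
    intro t ht
    have hmax : max t a = t := max_eq_left ht.1
    apply le_antisymm
    · exact csInf_le (hbdd t) ⟨t, ⟨ht, by rw [hmax]⟩, rfl⟩
    · refine le_csInf ((hSetne t).image χ) ?_
      rintro y ⟨s, hs, rfl⟩
      have hst : s ≤ t := by rw [hmax] at hs; exact hs.2
      exact hχ_anti s t hs.1.1 hst ht.2
  have hg_meas : Measurable g := hg_anti.measurable
  -- the weight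
  set w : ℝ → ENNReal := fun t => ENNReal.ofReal ((t + sd) ^ (d - 1)) with hw_def
  have hw_meas : Measurable w :=
    ((continuous_id.add continuous_const).pow _).measurable.ennreal_ofReal
  set ν : Measure ℝ := (volume.restrict I).withDensity w with hν_def
  -- RHS manipulation
  have hRHS1 : ∫⁻ t in I, ENNReal.ofReal ((t + sd) ^ (d - 1) * χ t) =
      ∫⁻ t in I, w t * ENNReal.ofReal (g t) := by
    refine setLIntegral_congr_fun hIm (fun t ht => ?_)
    have htsd : 0 ≤ t + sd := by
      have h1 : a ≤ t := ht.1
      rw [ha_def] at h1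
      linarith
    rw [ENNReal.ofReal_mul (pow_nonneg htsd _), hg_eq t ht]
  have hRHS2 : ∫⁻ t, ENNReal.ofReal (g t) ∂ν = ∫⁻ t in I, w t * ENNReal.ofReal (g t) := by
    rw [hν_def, lintegral_withDensity_eq_lintegral_mul (volume.restrict I) hw_meas
      hg_meas.ennreal_ofReal]
    rfl
  have hlc2 : ∫⁻ t, ENNReal.ofReal (g t) ∂ν =
      ∫⁻ s in Ioi (0 : ℝ), ν {t | s < g t} :=
    lintegral_eq_lintegral_meas_lt ν (ae_of_all _ hg_nonneg) hg_meas.aemeasurable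
  -- LHS manipulation
  set S : Set (Fin d → ℤ) := {h : Fin d → ℤ | ρ ≤ znorm h ∧ (znorm h : EReal) < ρ₁}
    with hS_def
  have hSm : MeasurableSet S := (Set.to_countable S).measurableSet
  have hLHS1 : ∑' h : {h : Fin d → ℤ // ρ ≤ znorm h ∧ (znorm h : EReal) < ρ₁},
      ENNReal.ofReal (χ (znorm h.1)) =
      ∫⁻ h in S, ENNReal.ofReal (χ (znorm h)) ∂Measure.count := by
    rw [← lintegral_indicator hSm, lintegral_count]
    exact tsum_subtype S fun h => ENNReal.ofReal (χ (znorm h))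
  have hlc1 : ∫⁻ h in S, ENNReal.ofReal (χ (znorm h)) ∂Measure.count =
      ∫⁻ s in Ioi (0 : ℝ), Measure.count ({h : Fin d → ℤ | s < χ (znorm h)} ∩ S) := by
    have hmain := lintegral_eq_lintegral_meas_lt (Measure.count.restrict S)
      (f := fun h : Fin d → ℤ => χ (znorm h))
      ((ae_restrict_iff' hSm).2 (ae_of_all _ fun h hh =>
        hχ_nonneg _ (haρ.trans hh.1) hh.2))
      (measurable_of_countable _).aemeasurable
    rw [hmain]
    refine lintegral_congr fun s => ?_
    rw [Measure.restrict_apply (Set.to_countable _).measurableSet]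
  -- pointwise comparison of the layer measures
  have hpt : ∀ s : ℝ, Measure.count ({h : Fin d → ℤ | s < χ (znorm h)} ∩ S) ≤
      C * ν {t | s < g t} := by
    intro s
    set B : Set (Fin d → ℤ) := {h : Fin d → ℤ | s < χ (znorm h)} ∩ S with hB_def
    have hBm : MeasurableSet B := (Set.to_countable B).measurableSet
    rw [Measure.count_apply hBm, ← ENNReal.tsum_set_one, ENNReal.tsum_eq_iSup_sum]
    refine iSup_le fun F => ?_
    rcases F.eq_empty_or_nonempty with hF | hF
    · simp [hF]
    obtain ⟨h₀, h₀F, hmax⟩ := F.exists_max_image (fun h => znorm h.1) hF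
    set u : ℝ := znorm h₀.1 with hu_def
    have h₀B : h₀.1 ∈ B := h₀.2
    have hsχ : s < χ u := h₀B.1
    have hρu : ρ ≤ u := h₀B.2.1
    have huρ₁ : (u : EReal) < ρ₁ := h₀B.2.2
    have hmlt : MeasurableSet {t : ℝ | s < g t} := measurableSet_lt measurable_const hg_meas
    have hνapp : ν {t : ℝ | s < g t} = ∫⁻ t in {t : ℝ | s < g t} ∩ I, w t := by
      rw [hν_def, withDensity_apply _ hmlt, Measure.restrict_restrict hmlt]
    have hsub2 : Icc a u ⊆ {t : ℝ | s < g t} ∩ I := by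
      intro t ht
      have htI : t ∈ I := ⟨ht.1, lt_of_le_of_lt (EReal.coe_le_coe_iff.2 ht.2) huρ₁⟩
      refine ⟨?_, htI⟩
      have : χ u ≤ χ t := hχ_anti t u ht.1 ht.2 huρ₁
      have hgt : g t = χ t := hg_eq t htI
      simp only [Set.mem_setOf_eq, hgt]
      linarith
    have hcard : (∑ _x ∈ F, (1 : ENNReal)) ≤
        Measure.count {h : Fin d → ℤ | ρ ≤ znorm h ∧ znorm h ≤ u} := by
      have hsub : ↑(F.image Subtype.val) ⊆ {h : Fin d → ℤ | ρ ≤ znorm h ∧ znorm h ≤ u} := by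
        intro h hh
        simp only [Finset.coe_image, Set.mem_image, Finset.mem_coe] at hh
        obtain ⟨hb, hbF, rfl⟩ := hh
        exact ⟨hb.2.2.1, hmax hb hbF⟩
      calc (∑ _x ∈ F, (1 : ENNReal)) = (F.card : ENNReal) := by simp
        _ = ((F.image Subtype.val).card : ENNReal) := by
            rw [Finset.card_image_of_injective _ Subtype.val_injective]
        _ = Measure.count (↑(F.image Subtype.val) : Set (Fin d → ℤ)) :=
            (Measure.count_apply_finset _).symm
        _ ≤ _ := measure_mono hsub
    refine hcard.trans ?_
    refine (Stmt16Aux.count_le ρ u).trans ?_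
    have hρsd : (0 : ℝ) ≤ ρ - sd := by rw [hsd_def] at *; linarith
    refine (Stmt16Aux.annulus_vol hd (a := ρ - sd) (b := u + sd) hρsd (by linarith)).trans ?_
    rw [hC_def]
    refine mul_le_mul_right ?_ _
    have hasd : a + sd = ρ - sd := by rw [ha_def]; ring
    have key := Stmt16Aux.lint_Icc hd sd (a := a) (u := u) (by rw [hasd]; linarith)
      (by linarith)
    rw [hasd] at key
    refine key.trans ?_
    rw [hνapp]
    exact lintegral_mono_set hsub2
  -- final assembly
  calc ∑' h : {h : Fin d → ℤ // ρ ≤ znorm h ∧ (znorm h : EReal) < ρ₁},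
        ENNReal.ofReal (χ (znorm h.1))
      = ∫⁻ s in Ioi (0 : ℝ), Measure.count ({h : Fin d → ℤ | s < χ (znorm h)} ∩ S) := by
        rw [hLHS1, hlc1]
    _ ≤ ∫⁻ s in Ioi (0 : ℝ), C * ν {t | s < g t} := lintegral_mono fun s => hpt s
    _ = C * ∫⁻ s in Ioi (0 : ℝ), ν {t | s < g t} :=
        lintegral_const_mul' _ _ ENNReal.ofReal_ne_top
    _ = C * ∫⁻ t, ENNReal.ofReal (g t) ∂ν := by rw [hlc2]
    _ = C * ∫⁻ t in I, ENNReal.ofReal ((t + sd) ^ (d - 1) * χ t) := by rw [hRHS2, hRHS1]
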